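/- arXiv:2605.28335 — 2 statements merged into one kernel-verified Lean document; each statement's English description precedes it below -/
import Mathlib

section
/- One-step strongly convex recurrence: suppose D_{t+1} ≤ (1 - η_t μ/2) D_t + (4η_t/μ) Φ where η_t = 2/(μ(t+γ)) for a real γ > 1 and all t ≥ 0. Then for every T ≥ 0, D_T - (8/μ²)Φ ≤ ((γ-1)/(T+γ-1))·(D_0 - (8/μ²)Φ). -/
theorem stmt_14 (μ γ Φ : ℝ) (hμ : 0 < μ) (hγ : 1 < γ) (hΦ : 0 ≤ Φ)
    (D : ℕ → ℝ) (hD : ∀ t, 0 ≤ D t)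
    (η : ℕ → ℝ) (hη : ∀ t, η t = 2 / (μ * (t + γ)))
    (hrec : ∀ t, D (t + 1) ≤ (1 - η t * μ / 2) * D t + (4 * η t / μ) * Φ) :
    ∀ T : ℕ, D T - (8 / μ ^ 2) * Φ ≤
      ((γ - 1) / (T + γ - 1)) * (D 0 - (8 / μ ^ 2) * Φ) := by
  have hμ' : (μ : ℝ) ≠ 0 := ne_of_gt hμ
  have step : ∀ t : ℕ, D (t + 1) - (8 / μ ^ 2) * Φ ≤
      (((t : ℝ) + γ - 1) / ((t : ℝ) + γ)) * (D t - (8 / μ ^ 2) * Φ) := by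
    intro t
    have ha : (0 : ℝ) < (t : ℝ) + γ := by positivity
    have ha' : ((t : ℝ) + γ) ≠ 0 := ne_of_gt ha
    have h := hrec t
    rw [hη] at h
    have heq : (1 - 2 / (μ * ((t : ℝ) + γ)) * μ / 2) * D t +
        (4 * (2 / (μ * ((t : ℝ) + γ))) / μ) * Φ =
        (((t : ℝ) + γ - 1) / ((t : ℝ) + γ)) * (D t - (8 / μ ^ 2) * Φ) +
        (8 / μ ^ 2) * Φ := by
      field_simp
      ring
    rw [heq] at h
    linarith
  intro T
  induction T with
  | zero =>
    simp only [Nat.cast_zero, zero_add]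
    rw [div_self (by linarith : γ - 1 ≠ 0), one_mul]
  | succ t ih =>
    have ha : (0 : ℝ) < (t : ℝ) + γ := by positivity
    have ha1 : (0 : ℝ) < (t : ℝ) + γ - 1 := by linarith
    have hc : (0 : ℝ) ≤ ((t : ℝ) + γ - 1) / ((t : ℝ) + γ) := by positivity
    have h2 := mul_le_mul_of_nonneg_left ih hc
    have h3 : ∀ X : ℝ, (((t : ℝ) + γ - 1) / ((t : ℝ) + γ)) * (((γ : ℝ) - 1) / ((t : ℝ) + γ - 1) * X) =
        ((γ - 1) / (((t : ℕ) + 1 : ℕ) + γ - 1)) * X := by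
      intro X
      have ha' : ((t : ℝ) + γ) ≠ 0 := ne_of_gt ha
      have ha1' : ((t : ℝ) + γ - 1) ≠ 0 := ne_of_gt ha1
      push_cast
      have hr : ((t : ℝ) + 1 + γ - 1) = (t : ℝ) + γ := by ring
      rw [hr]
      field_simp
    calc D (t + 1) - 8 / μ ^ 2 * Φ
        ≤ (((t : ℝ) + γ - 1) / ((t : ℝ) + γ)) * (D t - 8 / μ ^ 2 * Φ) := step t
      _ ≤ (((t : ℝ) + γ - 1) / ((t : ℝ) + γ)) * (((γ : ℝ) - 1) / ((t : ℝ) + γ - 1) * (D 0 - 8 / μ ^ 2 * Φ)) := h2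
      _ = _ := h3 _
end

section
/- Final strongly convex bound: under the recurrence D_{t+1} ≤ ((t+γ-1)/(t+γ)) D_t + (8Φ)/(μ²(t+γ)) with D_t ≥ 0, μ > 0, γ > 1, Φ ≥ 0, one has D_T ≤ ((γ-1)/(T+γ-1)) D_0 + (8/μ²)Φ for all T ≥ 0. -/
theorem stmt_16 (μ γ Φ : ℝ) (hμ : 0 < μ) (hγ : 1 < γ) (hΦ : 0 ≤ Φ)
    (D : ℕ → ℝ) (hD : ∀ t, 0 ≤ D t)
    (hrec : ∀ t : ℕ, D (t + 1) ≤ ((t + γ - 1) / (t + γ)) * D t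
      + (8 * Φ) / (μ ^ 2 * (t + γ))) :
    ∀ T : ℕ, D T ≤ ((γ - 1) / (T + γ - 1)) * D 0 + (8 / μ ^ 2) * Φ := by
  intro T
  induction T with
  | zero =>
      have h : ((0 : ℕ) : ℝ) + γ - 1 = γ - 1 := by push_cast; ring
      rw [h, div_self (by linarith : γ - 1 ≠ 0), one_mul]
      have : 0 ≤ (8 / μ ^ 2) * Φ := by positivity
      linarith
  | succ t ih =>
      have ht : (0 : ℝ) ≤ (t : ℝ) := Nat.cast_nonneg t
      have h1 : (0 : ℝ) < (t : ℝ) + γ := by linarith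
      have h2 : (0 : ℝ) < (t : ℝ) + γ - 1 := by linarith
      have hμ2 : μ ^ 2 ≠ 0 := by positivity
      have key : D (t + 1) ≤ ((t + γ - 1) / (t + γ)) *
          (((γ - 1) / (t + γ - 1)) * D 0 + (8 / μ ^ 2) * Φ)
          + (8 * Φ) / (μ ^ 2 * (t + γ)) := by
        refine le_trans (hrec t) ?_
        gcongr
      have heq : ((t + γ - 1) / (t + γ)) *
          (((γ - 1) / (t + γ - 1)) * D 0 + (8 / μ ^ 2) * Φ)
          + (8 * Φ) / (μ ^ 2 * (t + γ))
          = ((γ - 1) / (((t : ℕ) + 1 : ℕ) + γ - 1)) * D 0 + (8 / μ ^ 2) * Φ := by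
        have h1' : (t:ℝ) + γ ≠ 0 := h1.ne'
        have h2' : (t:ℝ) + γ - 1 ≠ 0 := h2.ne'
        push_cast
        rw [show (t:ℝ) + 1 + γ - 1 = (t:ℝ) + γ by ring]
        field_simp
        ring
      linarith [key, heq.le]
end
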